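/- Let γ = W̃_{(r+1):K}ᵀ α (so that α = W̃_{(r+1):K} γ) and let O = W̆_{(r+1):K}ᵀ W̃_{(r+1):K}. There exists an absolute constant C > 0 such that ‖W̆_{(r+1):K}ᵀ P̂_N (Xβ + Xθ + α) − Oγ‖ ≤ (Cτ/min{(1−σ_{r+1})³, σ_{r+s}³}) · ‖Xβ + Xθ + α‖. (The left-hand side is ‖𝔼γ̂ − Oγ‖ for the estimator γ̂ = W̆_{(r+1):K}ᵀ P̂_N Y under the model Y = Xβ + Xθ + α + ε with centered noise ε; the paper states this with ‖Xβ + Xθ + α‖ ≤ C√(np) yielding the bound Cτ√(np)/min{(1−σ_{r+1})³, σ_{r+s}³}.) -/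

import Mathlib

open Matrix

noncomputable def specNorm {m n : Type*} [Fintype m] [Fintype n] [DecidableEq n]
    (A : Matrix m n ℝ) : ℝ :=
  ‖LinearMap.toContinuousLinearMap (Matrix.toEuclideanLin A)‖

noncomputable def vnorm {n : Type*} [Fintype n] (v : n → ℝ) : ℝ :=
  Real.sqrt (∑ i, v i ^ 2)

namespace Aux

noncomputable def E {ι : Type*} [Fintype ι] (v : ι → ℝ) : EuclideanSpace ℝ ι :=
  (WithLp.equiv 2 _).symm v

@[simp] lemma E_apply {ι : Type*} [Fintype ι] (v : ι → ℝ) (i : ι) : E v i = v i := rfl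

lemma E_add {ι : Type*} [Fintype ι] (u v : ι → ℝ) : E (u + v) = E u + E v := rfl

lemma vnorm_eq {ι : Type*} [Fintype ι] (v : ι → ℝ) : vnorm v = ‖E v‖ := by
  rw [EuclideanSpace.norm_eq, vnorm]
  congr 1; apply Finset.sum_congr rfl; intro i _
  rw [E_apply, Real.norm_eq_abs, sq_abs]

lemma vnorm_nonneg {ι : Type*} [Fintype ι] (v : ι → ℝ) : 0 ≤ vnorm v :=
  Real.sqrt_nonneg _

lemma vnorm_sq {ι : Type*} [Fintype ι] (v : ι → ℝ) : vnorm v ^ 2 = ∑ i, v i ^ 2 := by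
  rw [vnorm, Real.sq_sqrt]
  positivity

lemma vnorm_eq_zero {ι : Type*} [Fintype ι] {v : ι → ℝ} (h : vnorm v = 0) : v = 0 := by
  rw [vnorm_eq] at h
  have := norm_eq_zero.mp h
  funext i
  have : E v i = (0 : EuclideanSpace ℝ ι) i := by rw [this]
  simpa using this

lemma vnorm_add_le {ι : Type*} [Fintype ι] (u v : ι → ℝ) :
    vnorm (u + v) ≤ vnorm u + vnorm v := by
  rw [vnorm_eq, vnorm_eq, vnorm_eq, E_add]; exact norm_add_le _ _

lemma vnorm_dot {ι : Type*} [Fintype ι] (v : ι → ℝ) : vnorm v ^ 2 = v ⬝ᵥ v := by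
  rw [vnorm_sq, dotProduct]; apply Finset.sum_congr rfl; intro i _; ring

lemma abs_dot_le {ι : Type*} [Fintype ι] (u v : ι → ℝ) :
    |u ⬝ᵥ v| ≤ vnorm u * vnorm v := by
  have h : u ⬝ᵥ v = (inner ℝ (E u) (E v) : ℝ) := by
    rw [PiLp.inner_apply, dotProduct]
    apply Finset.sum_congr rfl; intro i _
    simp [RCLike.inner_apply, mul_comm]
  rw [h, vnorm_eq, vnorm_eq]
  exact abs_real_inner_le_norm _ _

lemma mulVec_norm_le {m k : Type*} [Fintype m] [Fintype k] [DecidableEq k]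
    (M : Matrix m k ℝ) (x : k → ℝ) :
    vnorm (M.mulVec x) ≤ specNorm M * vnorm x := by
  have h : E (M.mulVec x) = (LinearMap.toContinuousLinearMap (Matrix.toEuclideanLin M)) (E x) := by
    simp [E, Matrix.toEuclideanLin_apply]
  rw [vnorm_eq, vnorm_eq, h]
  exact (LinearMap.toContinuousLinearMap (Matrix.toEuclideanLin M)).le_opNorm (E x)

lemma specNorm_nonneg {m k : Type*} [Fintype m] [Fintype k] [DecidableEq k]
    (M : Matrix m k ℝ) : 0 ≤ specNorm M := norm_nonneg _

lemma dot_mulVec_left {m k : Type*} [Fintype m] [Fintype k]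
    (M : Matrix m k ℝ) (x : k → ℝ) (y : m → ℝ) :
    (M.mulVec x) ⬝ᵥ y = x ⬝ᵥ (Mᵀ.mulVec y) := by
  simp only [dotProduct, Matrix.mulVec, dotProduct, Matrix.transpose_apply,
    Finset.sum_mul, Finset.mul_sum]
  rw [Finset.sum_comm]
  apply Finset.sum_congr rfl; intro i _
  apply Finset.sum_congr rfl; intro j _; ring

lemma transpose_mulVec_norm_le {m k : Type*} [Fintype m] [Fintype k] [DecidableEq m] [DecidableEq k]
    (M : Matrix m k ℝ) (y : m → ℝ) :
    vnorm (Mᵀ.mulVec y) ≤ specNorm M * vnorm y := by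
  set t := Mᵀ.mulVec y with ht
  rcases eq_or_lt_of_le (vnorm_nonneg t) with h0 | h0
  · rw [← h0]; exact mul_nonneg (specNorm_nonneg M) (vnorm_nonneg y)
  have key : vnorm t ^ 2 ≤ specNorm M * vnorm t * vnorm y := by
    calc vnorm t ^ 2 = t ⬝ᵥ t := vnorm_dot t
    _ = (M.mulVec t) ⬝ᵥ y := by
        rw [ht]
        rw [show (M.mulVec (Mᵀ.mulVec y)) ⬝ᵥ y = (Mᵀ.mulVec y) ⬝ᵥ (Mᵀ.mulVec y) from
          dot_mulVec_left M (Mᵀ.mulVec y) y]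
    _ ≤ |(M.mulVec t) ⬝ᵥ y| := le_abs_self _
    _ ≤ vnorm (M.mulVec t) * vnorm y := abs_dot_le _ _
    _ ≤ (specNorm M * vnorm t) * vnorm y := by
        apply mul_le_mul_of_nonneg_right (mulVec_norm_le M t) (vnorm_nonneg y)
    _ = specNorm M * vnorm t * vnorm y := rfl
  nlinarith [vnorm_nonneg y, specNorm_nonneg M]

lemma dot_mulVec_mulVec {n a b : Type*} [Fintype n] [Fintype a] [Fintype b]
    (P : Matrix n a ℝ) (Q : Matrix n b ℝ) (u : a → ℝ) (w : b → ℝ) :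
    (P.mulVec u) ⬝ᵥ (Q.mulVec w) = u ⬝ᵥ ((Pᵀ * Q).mulVec w) := by
  rw [dot_mulVec_left]
  congr 1
  rw [← Matrix.mulVec_mulVec]

lemma vnorm_mulVec_orth {n a : Type*} [Fintype n] [Fintype a] [DecidableEq a]
    (P : Matrix n a ℝ) (h : Pᵀ * P = 1) (x : a → ℝ) :
    vnorm (P.mulVec x) = vnorm x := by
  have h2 : vnorm (P.mulVec x) ^ 2 = vnorm x ^ 2 := by
    rw [vnorm_dot, vnorm_dot, dot_mulVec_mulVec, h, Matrix.one_mulVec]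
  have := vnorm_nonneg (P.mulVec x)
  have := vnorm_nonneg x
  nlinarith

lemma sum_sq_comp_le {ι κ : Type*} [Fintype ι] [Fintype κ] [DecidableEq κ]
    (f : ι → κ) (hf : Function.Injective f) (z : κ → ℝ) :
    ∑ i, z (f i) ^ 2 ≤ ∑ k, z k ^ 2 := by
  rw [show (∑ i, z (f i) ^ 2) = ∑ k ∈ Finset.univ.image f, z k ^ 2 from
    (Finset.sum_image (f := fun k => z k ^ 2) (g := f) (fun a _ b _ h => hf h)).symm]
  apply Finset.sum_le_sum_of_subset_of_nonneg (Finset.subset_univ _)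
  intro k _ _; positivity

lemma vnorm_comp_le {ι κ : Type*} [Fintype ι] [Fintype κ] [DecidableEq κ]
    (f : ι → κ) (hf : Function.Injective f) (z : κ → ℝ) :
    vnorm (fun i => z (f i)) ≤ vnorm z := by
  rw [vnorm, vnorm]
  exact Real.sqrt_le_sqrt (sum_sq_comp_le f hf z)

lemma sum_dite_lt {p k : ℕ} (hk : k ≤ p) (g : Fin k → ℝ) :
    (∑ i : Fin p, if h : (i : ℕ) < k then g ⟨i, h⟩ else 0) = ∑ j : Fin k, g j := by
  have hG : ∀ m : ℕ, (∑ i : Fin m, if h : (i : ℕ) < k then g ⟨i, h⟩ else 0)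
      = ∑ t ∈ Finset.range m, if h : t < k then g ⟨t, h⟩ else 0 := fun m =>
    Fin.sum_univ_eq_sum_range (fun t => if h : t < k then g ⟨t, h⟩ else 0) m
  rw [hG]
  rw [show (∑ j : Fin k, g j) = ∑ j : Fin k, if h : (j : ℕ) < k then g ⟨j, h⟩ else 0 by
    apply Finset.sum_congr rfl; intro j _; rw [dif_pos j.2]]
  rw [hG k]
  symm
  apply Finset.sum_subset (Finset.range_subset_range.mpr hk)
  intro t _ ht
  rw [dif_neg (by simpa using ht)]


lemma le_of_sq_le_sq {x c : ℝ} (hx : 0 ≤ x) (hc : 0 ≤ c) (h : x ^ 2 ≤ c ^ 2) : x ≤ c := by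
  nlinarith

lemma vnorm_neg {ι : Type*} [Fintype ι] (v : ι → ℝ) : vnorm (-v) = vnorm v := by
  rw [vnorm, vnorm]; congr 1; apply Finset.sum_congr rfl; intro i _; simp [neg_pow]

lemma vnorm_sum_elim_sq {ι κ : Type*} [Fintype ι] [Fintype κ] (u : ι → ℝ) (v : κ → ℝ) :
    vnorm (Sum.elim u v) ^ 2 = vnorm u ^ 2 + vnorm v ^ 2 := by
  rw [vnorm_sq, vnorm_sq, vnorm_sq, Fintype.sum_sum_type]; simp

lemma vnorm_sum_elim_zero {ι κ : Type*} [Fintype ι] [Fintype κ] (u : ι → ℝ) :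
    vnorm (Sum.elim u (0 : κ → ℝ)) = vnorm u := by
  rw [vnorm, vnorm, Fintype.sum_sum_type]; simp

lemma sum_dite_le {a b : ℕ} (g : Fin b → ℝ) (hg : ∀ j, 0 ≤ g j) :
    (∑ i : Fin a, if h : (i : ℕ) < b then g ⟨i, h⟩ else 0) ≤ ∑ j : Fin b, g j := by
  have hG : ∀ m : ℕ, (∑ i : Fin m, if h : (i : ℕ) < b then g ⟨i, h⟩ else 0)
      = ∑ t ∈ Finset.range m, if h : t < b then g ⟨t, h⟩ else 0 := fun m =>
    Fin.sum_univ_eq_sum_range (fun t => if h : t < b then g ⟨t, h⟩ else 0) m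
  rw [hG]
  have h1 : (∑ t ∈ Finset.range a, if h : t < b then g ⟨t, h⟩ else 0)
      = ∑ t ∈ Finset.range (min a b), if h : t < b then g ⟨t, h⟩ else 0 := by
    symm
    apply Finset.sum_subset (by apply Finset.range_subset_range.mpr; omega)
    intro t ht ht2
    rw [dif_neg (by simp at ht ht2; omega)]
  rw [h1]
  calc (∑ t ∈ Finset.range (min a b), if h : t < b then g ⟨t, h⟩ else 0)
      ≤ ∑ t ∈ Finset.range b, if h : t < b then g ⟨t, h⟩ else 0 := by
        apply Finset.sum_le_sum_of_subset_of_nonneg (by apply Finset.range_subset_range.mpr; omega)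
        intro t _ _
        by_cases h : t < b
        · rw [dif_pos h]; exact hg _
        · rw [dif_neg h]
    _ = ∑ j : Fin b, g j := by
        rw [← hG b]
        apply Finset.sum_congr rfl; intro j _; rw [dif_pos j.2]

lemma sum_ite_coe {b : ℕ} (jv : ℕ) (F : Fin b → ℝ) :
    (∑ k : Fin b, if jv = (k : ℕ) then F k else 0) = if h : jv < b then F ⟨jv, h⟩ else 0 := by
  by_cases h : jv < b
  · rw [dif_pos h, Finset.sum_eq_single (⟨jv, h⟩ : Fin b)]
    · rw [if_pos rfl]
    · intro k _ hk
      rw [if_neg]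
      intro hc
      exact hk (by apply Fin.ext; simp [← hc])
    · intro hk; exact absurd (Finset.mem_univ _) hk
  · rw [dif_neg h]
    apply Finset.sum_eq_zero
    intro k _
    rw [if_neg]
    intro hc
    exact h (hc ▸ k.2)

noncomputable def diagLike (w : ℕ → ℝ) (a b : ℕ) : Matrix (Fin a) (Fin b) ℝ :=
  Matrix.of fun j k => if (j : ℕ) = (k : ℕ) then w (j : ℕ) else 0

lemma diagLike_transpose (w : ℕ → ℝ) (a b : ℕ) : (diagLike w a b)ᵀ = diagLike w b a := by
  ext k j
  simp only [Matrix.transpose_apply, diagLike, Matrix.of_apply]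
  by_cases h : (j : ℕ) = (k : ℕ)
  · rw [if_pos h, if_pos h.symm, h]
  · rw [if_neg h, if_neg (fun hc => h hc.symm)]

lemma diagLike_mulVec {a b : ℕ} (w : ℕ → ℝ) (y : Fin b → ℝ) :
    (diagLike w a b).mulVec y
    = fun j : Fin a => if h : (j : ℕ) < b then w (j : ℕ) * y ⟨(j : ℕ), h⟩ else 0 := by
  funext j
  rw [Matrix.mulVec, dotProduct]
  rw [show (∑ k : Fin b, diagLike w a b j k * y k)
      = ∑ k : Fin b, if (j : ℕ) = (k : ℕ) then w (j : ℕ) * y k else 0 by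
    apply Finset.sum_congr rfl; intro k _
    simp only [diagLike, Matrix.of_apply, ite_mul, zero_mul]]
  rw [sum_ite_coe]

lemma diagLike_mulVec_apply {a b : ℕ} (w : ℕ → ℝ) (y : Fin b → ℝ) (j : Fin a) :
    ((diagLike w a b).mulVec y) j
    = if h : (j : ℕ) < b then w (j : ℕ) * y ⟨(j : ℕ), h⟩ else 0 := by
  rw [diagLike_mulVec]

lemma vnorm_diagLike_mulVec_le {a b : ℕ} (w : ℕ → ℝ) (C : ℝ) (hw : ∀ t, |w t| ≤ C)
    (y : Fin b → ℝ) :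
    vnorm ((diagLike w a b).mulVec y) ≤ C * vnorm y := by
  have hC : 0 ≤ C := le_trans (abs_nonneg _) (hw 0)
  apply le_of_sq_le_sq (vnorm_nonneg _) (mul_nonneg hC (vnorm_nonneg y))
  rw [diagLike_mulVec, vnorm_sq, mul_pow, vnorm_sq, Finset.mul_sum]
  calc (∑ j : Fin a, (if h : (j : ℕ) < b then w (j : ℕ) * y ⟨(j : ℕ), h⟩ else 0) ^ 2)
      = ∑ j : Fin a, if h : (j : ℕ) < b then (w (j : ℕ) * y ⟨(j : ℕ), h⟩) ^ 2 else 0 := by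
        apply Finset.sum_congr rfl; intro j _
        by_cases h : (j : ℕ) < b
        · rw [dif_pos h, dif_pos h]
        · rw [dif_neg h, dif_neg h]; norm_num
    _ ≤ ∑ k : Fin b, (w (k : ℕ) * y k) ^ 2 := by
        apply sum_dite_le (fun k => (w (k : ℕ) * y k) ^ 2)
        intro k; positivity
    _ ≤ ∑ k : Fin b, C ^ 2 * y k ^ 2 := by
        apply Finset.sum_le_sum
        intro k _
        rw [mul_pow]
        apply mul_le_mul_of_nonneg_right _ (sq_nonneg _)
        calc w (k : ℕ) ^ 2 = |w (k : ℕ)| ^ 2 := (sq_abs _).symm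
          _ ≤ C ^ 2 := by nlinarith [hw (k : ℕ), abs_nonneg (w (k : ℕ))]

lemma orth_mul {n a b : Type*} [Fintype n] [Fintype a] [Fintype b] [DecidableEq a] [DecidableEq b]
    (P : Matrix n a ℝ) (Q : Matrix a b ℝ) (hP : Pᵀ * P = 1) (hQ : Qᵀ * Q = 1) :
    (P * Q)ᵀ * (P * Q) = 1 := by
  rw [Matrix.transpose_mul, Matrix.mul_assoc, ← Matrix.mul_assoc Pᵀ P Q, hP, Matrix.one_mul, hQ]

lemma sub_transpose_mul {nn a b p q : Type*} [Fintype nn] [Fintype a] [Fintype b]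
    [Fintype p] [Fintype q]
    (A : Matrix nn p ℝ) (B : Matrix nn q ℝ) (f : a → p) (g : b → q) :
    (A.submatrix id f)ᵀ * (B.submatrix id g) = (Aᵀ * B).submatrix f g := by
  ext i j
  simp [Matrix.mul_apply]

lemma sub_transpose_mul_left {nn a p q : Type*} [Fintype nn] [Fintype a] [Fintype p] [Fintype q]
    (A : Matrix nn p ℝ) (B : Matrix nn q ℝ) (f : a → p) :
    (A.submatrix id f)ᵀ * B = (Aᵀ * B).submatrix f id := by
  ext i j
  simp [Matrix.mul_apply]

lemma sub_transpose_mulVec {nn a p : Type*} [Fintype nn] [Fintype a] [Fintype p]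
    (A : Matrix nn p ℝ) (f : a → p) (x : nn → ℝ) :
    (A.submatrix id f)ᵀ.mulVec x = fun j => (Aᵀ.mulVec x) (f j) := by
  funext j
  simp [Matrix.mulVec, dotProduct]

lemma submatrix_one_inj {a b : Type*} [Fintype a] [Fintype b] [DecidableEq a] [DecidableEq b]
    (f : a → b) (hf : Function.Injective f) :
    (1 : Matrix b b ℝ).submatrix f f = 1 := by
  ext i j
  simp only [Matrix.submatrix_apply, Matrix.one_apply, hf.eq_iff]

lemma one_submatrix_mulVec {a b : Type*} [Fintype a] [Fintype b] [DecidableEq b]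
    (f : a → b) (u : b → ℝ) :
    ((1 : Matrix b b ℝ).submatrix f id).mulVec u = fun j => u (f j) := by
  funext j
  simp [Matrix.mulVec, dotProduct, Matrix.one_apply]

end Aux
namespace Aux

open Matrix

set_option maxHeartbeats 1600000 in
lemma weyl_step {n p K r : ℕ} (hr1p : r + 1 ≤ p) (hr1K : r + 1 ≤ K)
    (Z : Matrix (Fin n) (Fin p) ℝ) (W What : Matrix (Fin n) (Fin K) ℝ)
    (U Uh : Matrix (Fin p) (Fin p) ℝ) (V Vh : Matrix (Fin K) (Fin K) ℝ)
    (σ σh : ℕ → ℝ)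
    (hZ : Zᵀ * Z = 1) (hU : Uᵀ * U = 1) (hV : Vᵀ * V = 1)
    (hUh : Uhᵀ * Uh = 1) (hVh : Vhᵀ * Vh = 1)
    (hSVD : Zᵀ * W = U * diagLike σ p K * Vᵀ)
    (hSVDh : Zᵀ * What = Uh * diagLike σh p K * Vhᵀ)
    (hσanti : ∀ i j, i ≤ j → σ j ≤ σ i) (hσnn : ∀ i, 0 ≤ σ i)
    (hσhanti : ∀ i j, i ≤ j → σh j ≤ σh i) (hσhnn : ∀ i, 0 ≤ σh i) :
    σh r ^ 2 ≤ σ r ^ 2 + specNorm ((What * Whatᵀ - W * Wᵀ) * Z) := by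
  classical
  set τ := specNorm ((What * Whatᵀ - W * Wᵀ) * Z) with hτ
  have hUU' : U * Uᵀ = 1 := mul_eq_one_comm.mp hU
  have hUhUh' : Uh * Uhᵀ = 1 := mul_eq_one_comm.mp hUh
  -- subspaces
  set fU : Fin r → EuclideanSpace ℝ (Fin p) :=
    fun i => E (fun tt => U tt ⟨i.1, by have := i.2; omega⟩) with hfU
  set fUh : Fin (r + 1) → EuclideanSpace ℝ (Fin p) :=
    fun i => E (fun tt => Uh tt ⟨i.1, by have := i.2; omega⟩) with hfUh
  set S1 : Submodule ℝ (EuclideanSpace ℝ (Fin p)) := (Submodule.span ℝ (Set.range fU))ᗮ with hS1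
  set S2 : Submodule ℝ (EuclideanSpace ℝ (Fin p)) := Submodule.span ℝ (Set.range fUh) with hS2
  have hON : Orthonormal ℝ fUh := by
    rw [orthonormal_iff_ite]
    intro i j
    rw [hfUh, PiLp.inner_apply]
    simp only [E_apply, RCLike.inner_apply, conj_trivial]
    have h1 : (∑ tt : Fin p, Uh tt ⟨j.1, by have := j.2; omega⟩ * Uh tt ⟨i.1, by have := i.2; omega⟩)
        = (Uhᵀ * Uh) ⟨j.1, by have := j.2; omega⟩ ⟨i.1, by have := i.2; omega⟩ := by
      rw [Matrix.mul_apply]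
      apply Finset.sum_congr rfl; intro tt _; rfl
    rw [h1, hUh, Matrix.one_apply]
    by_cases h : i = j
    · rw [if_pos (by rw [h]), if_pos h]
    · rw [if_neg, if_neg h]
      intro hc
      exact h (by apply Fin.ext; have := congrArg Fin.val hc; simp at this; omega)
  have hrank2 : Module.finrank ℝ S2 = r + 1 := by
    rw [hS2, finrank_span_eq_card hON.linearIndependent, Fintype.card_fin]
  have hrank1 : p - r ≤ Module.finrank ℝ S1 := by
    rw [hS1]
    have h1 := Submodule.finrank_add_finrank_orthogonal (Submodule.span ℝ (Set.range fU))
    have h2 : Module.finrank ℝ (Submodule.span ℝ (Set.range fU)) ≤ r := by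
      calc Module.finrank ℝ (Submodule.span ℝ (Set.range fU))
          ≤ (Set.range fU).toFinset.card := finrank_span_le_card _
        _ = (Finset.univ.image fU).card := by rw [Set.toFinset_range]
        _ ≤ Finset.univ.card := Finset.card_image_le
        _ = r := by rw [Finset.card_univ, Fintype.card_fin]
    have h3 : Module.finrank ℝ (EuclideanSpace ℝ (Fin p)) = p := finrank_euclideanSpace_fin
    omega
  obtain ⟨x, hxm, hx0⟩ : ∃ x, x ∈ S1 ⊓ S2 ∧ x ≠ 0 := by
    have hsum := Submodule.finrank_sup_add_finrank_inf_eq S1 S2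
    have hsup : Module.finrank ℝ ↥(S1 ⊔ S2) ≤ p :=
      le_trans (Submodule.finrank_le _) (le_of_eq finrank_euclideanSpace_fin)
    have hpos : 0 < Module.finrank ℝ ↥(S1 ⊓ S2) := by omega
    have hne : (S1 ⊓ S2) ≠ ⊥ := by
      intro hbot
      rw [hbot, finrank_bot] at hpos
      omega
    exact Submodule.exists_mem_ne_zero_of_ne_bot hne
  have hx1 : x ∈ S1 := hxm.1
  obtain ⟨d, hd⟩ := (Submodule.mem_span_range_iff_exists_fun ℝ).mp hxm.2
  set xv : Fin p → ℝ := fun tt => x tt with hxv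
  have hxE : E xv = x := rfl
  set d' : Fin p → ℝ := fun i => if h : (i : ℕ) < r + 1 then d ⟨i.1, h⟩ else 0 with hd'
  have hxUh : xv = Uh *ᵥ d' := by
    funext tt
    have h1 : (WithLp.linearEquiv 2 ℝ (Fin p → ℝ)) x
        = ∑ i : Fin (r + 1), (WithLp.linearEquiv 2 ℝ (Fin p → ℝ)) (d i • fUh i) := by
      rw [← map_sum, hd]
    have h4 : ∀ i : Fin (r + 1), (WithLp.linearEquiv 2 ℝ (Fin p → ℝ)) (d i • fUh i)
        = fun tt => d i * Uh tt ⟨i.1, by have := i.2; omega⟩ := by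
      intro i; funext tt2; rfl
    have h2 : xv = ∑ i : Fin (r + 1), (fun tt => d i * Uh tt ⟨i.1, by have := i.2; omega⟩) :=
      calc xv = (WithLp.linearEquiv 2 ℝ (Fin p → ℝ)) x := rfl
        _ = ∑ i : Fin (r + 1), (WithLp.linearEquiv 2 ℝ (Fin p → ℝ)) (d i • fUh i) := h1
        _ = ∑ i : Fin (r + 1), (fun tt => d i * Uh tt ⟨i.1, by have := i.2; omega⟩) :=
            Finset.sum_congr rfl (fun i _ => h4 i)
    rw [h2, Finset.sum_apply]
    rw [Matrix.mulVec, dotProduct]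
    rw [show (∑ i : Fin p, Uh tt i * d' i)
        = ∑ i : Fin p, if h : (i : ℕ) < r + 1
            then Uh tt ⟨(i : ℕ), by have := i.2; omega⟩ * d ⟨(i : ℕ), h⟩ else 0 by
      apply Finset.sum_congr rfl; intro i _
      by_cases h : (i : ℕ) < r + 1
      · simp only [hd']; rw [dif_pos h, dif_pos h]
      · simp only [hd']; rw [dif_neg h, dif_neg h]; ring]
    rw [Aux.sum_dite_lt hr1p (fun i : Fin (r+1) => Uh tt ⟨(i : ℕ), by have := i.2; omega⟩ * d i)]
    apply Finset.sum_congr rfl; intro i _; ring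
  set cc : Fin p → ℝ := Uᵀ *ᵥ xv with hcc
  have hccr : ∀ i : Fin p, (i : ℕ) < r → cc i = 0 := by
    intro i hir
    have hgen : fU ⟨i.1, hir⟩ ∈ Submodule.span ℝ (Set.range fU) :=
      Submodule.subset_span (Set.mem_range_self _)
    have h0 := (Submodule.mem_orthogonal _ x).mp hx1 _ hgen
    rw [hfU, PiLp.inner_apply] at h0
    simp only [E_apply, RCLike.inner_apply, conj_trivial] at h0
    rw [hcc, Matrix.mulVec, dotProduct]
    rw [← h0]
    apply Finset.sum_congr rfl; intro tt _
    rw [Matrix.transpose_apply, hxv, mul_comm]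
  have hx_ne : vnorm xv ≠ 0 := by
    intro h
    apply hx0
    have h1 : xv = 0 := vnorm_eq_zero h
    rw [← hxE, h1]
    rfl
  have hvx_pos : 0 < vnorm xv := lt_of_le_of_ne (vnorm_nonneg _) (Ne.symm hx_ne)
  set zx : Fin n → ℝ := Z *ᵥ xv with hzx
  -- lower bound via What
  have hBlow : σh r ^ 2 * vnorm xv ^ 2 ≤ vnorm (Whatᵀ *ᵥ zx) ^ 2 := by
    have hWhZ : Whatᵀ * Z = Vh * (diagLike σh p K)ᵀ * Uhᵀ := by
      have h0 := congrArg Matrix.transpose hSVDh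
      rw [Matrix.transpose_mul, Matrix.transpose_transpose] at h0
      rw [h0, Matrix.transpose_mul, Matrix.transpose_mul, Matrix.transpose_transpose,
        Matrix.mul_assoc]
    have h1 : Whatᵀ *ᵥ zx = Vh *ᵥ ((diagLike σh p K)ᵀ *ᵥ d') := by
      rw [hzx, hxUh, Matrix.mulVec_mulVec, Matrix.mulVec_mulVec, Matrix.mulVec_mulVec, hWhZ]
      congr 1
      rw [Matrix.mul_assoc, Matrix.mul_assoc, hUh, Matrix.mul_one]
    rw [h1, vnorm_mulVec_orth Vh hVh]
    have h2 : (diagLike σh p K)ᵀ *ᵥ d'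
        = fun k : Fin K => if h : (k : ℕ) < r + 1 then σh (k : ℕ) * d ⟨(k : ℕ), h⟩ else 0 := by
      rw [show (diagLike σh p K)ᵀ = diagLike σh K p from diagLike_transpose σh p K,
        diagLike_mulVec]
      funext k
      by_cases h : (k : ℕ) < r + 1
      · simp only [hd']
        rw [dif_pos (by omega : (k : ℕ) < p), dif_pos h, dif_pos h]
      · by_cases h2 : (k : ℕ) < p
        · simp only [hd']
          rw [dif_pos h2, dif_neg h, dif_neg (by simpa using h : ¬ ((⟨(k:ℕ), h2⟩ : Fin p) : ℕ) < r + 1)]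
          ring
        · rw [dif_neg h2, dif_neg h]
    have h3 : vnorm xv = vnorm d' := by rw [hxUh]; exact vnorm_mulVec_orth Uh hUh d'
    have h4 : vnorm d' ^ 2 = ∑ j : Fin (r + 1), d j ^ 2 := by
      rw [vnorm_sq]
      rw [show (∑ i : Fin p, d' i ^ 2)
          = ∑ i : Fin p, if h : (i : ℕ) < r + 1 then d ⟨(i : ℕ), h⟩ ^ 2 else 0 by
        apply Finset.sum_congr rfl; intro i _
        simp only [hd']
        by_cases h : (i : ℕ) < r + 1
        · rw [dif_pos h, dif_pos h]
        · rw [dif_neg h, dif_neg h]; norm_num]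
      exact Aux.sum_dite_lt hr1p (fun j : Fin (r + 1) => d j ^ 2)
    have h5 : vnorm ((diagLike σh p K)ᵀ *ᵥ d') ^ 2
        = ∑ j : Fin (r + 1), (σh (j : ℕ) * d j) ^ 2 := by
      rw [vnorm_sq]
      rw [show (∑ k : Fin K, ((diagLike σh p K)ᵀ *ᵥ d') k ^ 2)
          = ∑ k : Fin K, if h : (k : ℕ) < r + 1 then (σh (k : ℕ) * d ⟨(k : ℕ), h⟩) ^ 2 else 0
          from Finset.sum_congr rfl (fun k _ => by
            rw [congrFun h2 k]
            by_cases h : (k : ℕ) < r + 1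
            · rw [dif_pos h, dif_pos h]
            · rw [dif_neg h, dif_neg h]; norm_num)]
      exact Aux.sum_dite_lt hr1K (fun j : Fin (r + 1) => (σh (j : ℕ) * d j) ^ 2)
    rw [h5, h3, h4, Finset.mul_sum]
    apply Finset.sum_le_sum
    intro j _
    rw [mul_pow]
    apply mul_le_mul_of_nonneg_right _ (sq_nonneg _)
    have hle := hσhanti (j : ℕ) r (by omega)
    nlinarith [hσhnn r, hσhnn (j : ℕ)]
  -- upper bound via W
  have hAup : vnorm (Wᵀ *ᵥ zx) ^ 2 ≤ σ r ^ 2 * vnorm xv ^ 2 := by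
    have hWZ : Wᵀ * Z = V * (diagLike σ p K)ᵀ * Uᵀ := by
      have h0 := congrArg Matrix.transpose hSVD
      rw [Matrix.transpose_mul, Matrix.transpose_transpose] at h0
      rw [h0, Matrix.transpose_mul, Matrix.transpose_mul, Matrix.transpose_transpose,
        Matrix.mul_assoc]
    have h1 : Wᵀ *ᵥ zx = V *ᵥ ((diagLike σ p K)ᵀ *ᵥ cc) :=
      calc Wᵀ *ᵥ zx = (Wᵀ * Z) *ᵥ xv := by rw [hzx, Matrix.mulVec_mulVec]
        _ = (V * ((diagLike σ p K)ᵀ * Uᵀ)) *ᵥ xv := by rw [hWZ, Matrix.mul_assoc]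
        _ = V *ᵥ (((diagLike σ p K)ᵀ * Uᵀ) *ᵥ xv) := (Matrix.mulVec_mulVec xv V _).symm
        _ = V *ᵥ ((diagLike σ p K)ᵀ *ᵥ (Uᵀ *ᵥ xv)) :=
            congrArg (fun u => V *ᵥ u) ((Matrix.mulVec_mulVec xv (diagLike σ p K)ᵀ Uᵀ).symm)
        _ = V *ᵥ ((diagLike σ p K)ᵀ *ᵥ cc) := by rw [hcc]
    rw [h1, vnorm_mulVec_orth V hV]
    have h2 : vnorm cc = vnorm xv := by
      rw [hcc]
      exact vnorm_mulVec_orth Uᵀ (by rw [Matrix.transpose_transpose]; exact hUU') xv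
    rw [show (diagLike σ p K)ᵀ = diagLike σ K p from diagLike_transpose σ p K, diagLike_mulVec,
      vnorm_sq]
    calc (∑ k : Fin K, (if h : (k : ℕ) < p then σ (k : ℕ) * cc ⟨(k : ℕ), h⟩ else 0) ^ 2)
        = ∑ k : Fin K, if h : (k : ℕ) < p then (σ (k : ℕ) * cc ⟨(k : ℕ), h⟩) ^ 2 else 0 := by
          apply Finset.sum_congr rfl; intro k _
          by_cases h : (k : ℕ) < p
          · rw [dif_pos h, dif_pos h]
          · rw [dif_neg h, dif_neg h]; norm_num
      _ ≤ ∑ i : Fin p, (σ (i : ℕ) * cc i) ^ 2 := by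
          apply Aux.sum_dite_le (fun i : Fin p => (σ (i : ℕ) * cc i) ^ 2)
          intro i; positivity
      _ ≤ ∑ i : Fin p, σ r ^ 2 * cc i ^ 2 := by
          apply Finset.sum_le_sum
          intro i _
          rcases lt_or_ge (i : ℕ) r with h | h
          · rw [hccr i h]
            simp
          · have hle := hσanti r (i : ℕ) h
            rw [mul_pow]
            apply mul_le_mul_of_nonneg_right _ (sq_nonneg _)
            nlinarith [hσnn r, hσnn (i : ℕ)]
      _ = σ r ^ 2 * vnorm xv ^ 2 := by rw [← Finset.mul_sum, ← vnorm_sq, h2]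
  -- perturbation
  have hpert : vnorm (Whatᵀ *ᵥ zx) ^ 2 - vnorm (Wᵀ *ᵥ zx) ^ 2 ≤ τ * vnorm xv ^ 2 := by
    have hB : vnorm (Whatᵀ *ᵥ zx) ^ 2 = zx ⬝ᵥ ((What * Whatᵀ) *ᵥ zx) := by
      rw [vnorm_dot, dot_mulVec_mulVec, Matrix.transpose_transpose]
    have hA : vnorm (Wᵀ *ᵥ zx) ^ 2 = zx ⬝ᵥ ((W * Wᵀ) *ᵥ zx) := by
      rw [vnorm_dot, dot_mulVec_mulVec, Matrix.transpose_transpose]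
    have hdiff : zx ⬝ᵥ ((What * Whatᵀ) *ᵥ zx) - zx ⬝ᵥ ((W * Wᵀ) *ᵥ zx)
        = zx ⬝ᵥ (((What * Whatᵀ - W * Wᵀ) * Z) *ᵥ xv) := by
      rw [← dotProduct_sub, ← Matrix.sub_mulVec, ← Matrix.mulVec_mulVec, ← hzx]
    have hzxn : vnorm zx = vnorm xv := by rw [hzx]; exact vnorm_mulVec_orth Z hZ xv
    rw [hB, hA, hdiff]
    calc zx ⬝ᵥ (((What * Whatᵀ - W * Wᵀ) * Z) *ᵥ xv)
        ≤ |zx ⬝ᵥ (((What * Whatᵀ - W * Wᵀ) * Z) *ᵥ xv)| := le_abs_self _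
      _ ≤ vnorm zx * vnorm (((What * Whatᵀ - W * Wᵀ) * Z) *ᵥ xv) := abs_dot_le _ _
      _ ≤ vnorm zx * (τ * vnorm xv) := by
          apply mul_le_mul_of_nonneg_left _ (vnorm_nonneg _)
          rw [hτ]
          exact mulVec_norm_le _ _
      _ = τ * vnorm xv ^ 2 := by rw [hzxn]; ring
  nlinarith [hBlow, hAup, hpert, hvx_pos, mul_pos hvx_pos hvx_pos]

end Aux
namespace Aux
open Matrix

set_option maxHeartbeats 1000000 in
lemma Ablock_low {a b : ℕ} (G : Matrix (Fin a) (Fin b) ℝ) (C : ℝ) (hC : 0 ≤ C)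
    (hG : ∀ y2, vnorm (G *ᵥ y2) ≤ C * vnorm y2)
    (hGt : ∀ y1, vnorm (Gᵀ *ᵥ y1) ≤ C * vnorm y1)
    (y : Fin a ⊕ Fin b → ℝ) :
    (1 - C) * vnorm y ≤ vnorm ((Matrix.fromBlocks 1 G Gᵀ 1) *ᵥ y) := by
  have hy : (Matrix.fromBlocks 1 G Gᵀ 1) *ᵥ y
      = y + Sum.elim (G *ᵥ (y ∘ Sum.inr)) (Gᵀ *ᵥ (y ∘ Sum.inl)) := by
    rw [Matrix.fromBlocks_mulVec, Matrix.one_mulVec, Matrix.one_mulVec]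
    funext i
    cases i with
    | inl j => simp
    | inr j => simp [add_comm]
  have hTn : vnorm (Sum.elim (G *ᵥ (y ∘ Sum.inr)) (Gᵀ *ᵥ (y ∘ Sum.inl))) ≤ C * vnorm y := by
    apply le_of_sq_le_sq (vnorm_nonneg _) (mul_nonneg hC (vnorm_nonneg _))
    rw [vnorm_sum_elim_sq, mul_pow]
    have h1 := hG (y ∘ Sum.inr)
    have h2 := hGt (y ∘ Sum.inl)
    have hyy : vnorm y ^ 2 = vnorm (y ∘ Sum.inl) ^ 2 + vnorm (y ∘ Sum.inr) ^ 2 := by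
      rw [← vnorm_sum_elim_sq, Sum.elim_comp_inl_inr]
    nlinarith [vnorm_nonneg (G *ᵥ (y ∘ Sum.inr)), vnorm_nonneg (Gᵀ *ᵥ (y ∘ Sum.inl)),
      vnorm_nonneg (y ∘ Sum.inr), vnorm_nonneg (y ∘ Sum.inl)]
  have e1 : vnorm y ≤ vnorm ((Matrix.fromBlocks 1 G Gᵀ 1) *ᵥ y)
      + vnorm (Sum.elim (G *ᵥ (y ∘ Sum.inr)) (Gᵀ *ᵥ (y ∘ Sum.inl))) := by
    calc vnorm y
        = vnorm ((Matrix.fromBlocks 1 G Gᵀ 1) *ᵥ y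
            + -(Sum.elim (G *ᵥ (y ∘ Sum.inr)) (Gᵀ *ᵥ (y ∘ Sum.inl)))) := by
          rw [hy]; congr 1; abel
      _ ≤ vnorm ((Matrix.fromBlocks 1 G Gᵀ 1) *ᵥ y)
          + vnorm (-(Sum.elim (G *ᵥ (y ∘ Sum.inr)) (Gᵀ *ᵥ (y ∘ Sum.inl)))) := vnorm_add_le _ _
      _ = vnorm ((Matrix.fromBlocks 1 G Gᵀ 1) *ᵥ y)
          + vnorm (Sum.elim (G *ᵥ (y ∘ Sum.inr)) (Gᵀ *ᵥ (y ∘ Sum.inl))) := by rw [vnorm_neg]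
  nlinarith [vnorm_nonneg y]

set_option maxHeartbeats 800000 in
lemma isUnit_det_of_low {S : Type*} [Fintype S] [DecidableEq S]
    (A : Matrix S S ℝ) (c : ℝ) (hc : 0 < c)
    (h : ∀ y, c * vnorm y ≤ vnorm (A *ᵥ y)) : IsUnit A.det := by
  have hinj : Function.Injective A.mulVec := by
    intro y1 y2 h12
    have h0 : A *ᵥ (y1 - y2) = 0 := by rw [Matrix.mulVec_sub, h12, sub_self]
    have h1 := h (y1 - y2)
    rw [h0] at h1
    have h00 : vnorm (0 : S → ℝ) = 0 := by rw [vnorm]; simp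
    rw [h00] at h1
    have hle : vnorm (y1 - y2) ≤ 0 := by nlinarith
    have h2 : y1 - y2 = 0 := vnorm_eq_zero (le_antisymm hle (vnorm_nonneg _))
    exact sub_eq_zero.mp h2
  exact (Matrix.isUnit_iff_isUnit_det A).mp (Matrix.mulVec_injective_iff_isUnit.mp hinj)

set_option maxHeartbeats 1000000 in
lemma norm_lower {n a1 a2 a3 : Type*} [Fintype n] [Fintype a1] [Fintype a2] [Fintype a3]
    [DecidableEq a1] [DecidableEq a2] [DecidableEq a3]
    (P1 : Matrix n a1 ℝ) (P2 : Matrix n a2 ℝ) (P3 : Matrix n a3 ℝ)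
    (h1 : P1ᵀ * P1 = 1) (h2 : P2ᵀ * P2 = 1) (h3 : P3ᵀ * P3 = 1)
    (h21 : P2ᵀ * P1 = 0) (h23 : P2ᵀ * P3 = 0)
    (G : Matrix a1 a3 ℝ) (h13 : P1ᵀ * P3 = G)
    (sr : ℝ) (hsr : 0 ≤ sr) (hsr1 : sr < 1)
    (hGn : ∀ v3, vnorm (G *ᵥ v3) ≤ sr * vnorm v3)
    (mm : ℝ) (hm0 : 0 ≤ mm) (hmm : mm ≤ 1 - sr) (hm1 : mm ≤ 1)
    (c1 : a1 → ℝ) (c2 : a2 → ℝ) (c3 : a3 → ℝ) :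
    mm * vnorm (P3 *ᵥ c3) ≤ vnorm (P1 *ᵥ c1 + P2 *ᵥ c2 + P3 *ᵥ c3) := by
  have hx2 : (P1 *ᵥ c1) ⬝ᵥ (P1 *ᵥ c1) = vnorm c1 ^ 2 := by
    rw [dot_mulVec_mulVec, h1, Matrix.one_mulVec, ← vnorm_dot]
  have hy2 : (P2 *ᵥ c2) ⬝ᵥ (P2 *ᵥ c2) = vnorm c2 ^ 2 := by
    rw [dot_mulVec_mulVec, h2, Matrix.one_mulVec, ← vnorm_dot]
  have hz2 : (P3 *ᵥ c3) ⬝ᵥ (P3 *ᵥ c3) = vnorm c3 ^ 2 := by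
    rw [dot_mulVec_mulVec, h3, Matrix.one_mulVec, ← vnorm_dot]
  have hxy : (P2 *ᵥ c2) ⬝ᵥ (P1 *ᵥ c1) = 0 := by
    rw [dot_mulVec_mulVec, h21, Matrix.zero_mulVec, dotProduct_zero]
  have hyz : (P2 *ᵥ c2) ⬝ᵥ (P3 *ᵥ c3) = 0 := by
    rw [dot_mulVec_mulVec, h23, Matrix.zero_mulVec, dotProduct_zero]
  have hxz : (P1 *ᵥ c1) ⬝ᵥ (P3 *ᵥ c3) = c1 ⬝ᵥ (G *ᵥ c3) := by
    rw [dot_mulVec_mulVec, h13]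
  have hXbd : |c1 ⬝ᵥ (G *ᵥ c3)| ≤ sr * (vnorm c1 * vnorm c3) := by
    calc |c1 ⬝ᵥ (G *ᵥ c3)| ≤ vnorm c1 * vnorm (G *ᵥ c3) := abs_dot_le _ _
      _ ≤ vnorm c1 * (sr * vnorm c3) :=
          mul_le_mul_of_nonneg_left (hGn c3) (vnorm_nonneg c1)
      _ = sr * (vnorm c1 * vnorm c3) := by ring
  have hvsq : vnorm (P1 *ᵥ c1 + P2 *ᵥ c2 + P3 *ᵥ c3) ^ 2
      = vnorm c1 ^ 2 + vnorm c2 ^ 2 + vnorm c3 ^ 2 + 2 * (c1 ⬝ᵥ (G *ᵥ c3)) := by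
    rw [vnorm_dot]
    simp only [add_dotProduct, dotProduct_add]
    rw [dotProduct_comm (P1 *ᵥ c1) (P2 *ᵥ c2),
      dotProduct_comm (P3 *ᵥ c3) (P1 *ᵥ c1),
      dotProduct_comm (P3 *ᵥ c3) (P2 *ᵥ c2)]
    rw [hx2, hy2, hz2, hxy, hyz, hxz]
    ring
  have hXlow : -(sr * (vnorm c1 * vnorm c3)) ≤ c1 ⬝ᵥ (G *ᵥ c3) := (abs_le.mp hXbd).1
  have hz3 : vnorm (P3 *ᵥ c3) = vnorm c3 := vnorm_mulVec_orth P3 h3 c3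
  apply le_of_sq_le_sq (mul_nonneg hm0 (vnorm_nonneg _)) (vnorm_nonneg _)
  rw [mul_pow, hz3]
  have e1 : vnorm c1 ^ 2 + vnorm c3 ^ 2 - 2 * (sr * (vnorm c1 * vnorm c3))
      ≤ vnorm (P1 *ᵥ c1 + P2 *ᵥ c2 + P3 *ᵥ c3) ^ 2 := by
    nlinarith [sq_nonneg (vnorm c2)]
  have e2 : (1 - sr) * vnorm c3 ^ 2
      ≤ vnorm c1 ^ 2 + vnorm c3 ^ 2 - 2 * (sr * (vnorm c1 * vnorm c3)) := by
    nlinarith [sq_nonneg (vnorm c1 - vnorm c3), sq_nonneg (vnorm c1)]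
  have e3 : mm ^ 2 * vnorm c3 ^ 2 ≤ (1 - sr) * vnorm c3 ^ 2 := by
    have h2m : mm ^ 2 ≤ 1 - sr := by nlinarith
    exact mul_le_mul_of_nonneg_right h2m (sq_nonneg _)
  linarith

lemma gapbound (σr σhr m τ : ℝ) (h1 : 0 ≤ σr) (h2 : σr < 1) (h3 : 0 ≤ σhr)
    (h4 : σhr ^ 2 ≤ σr ^ 2 + τ) (h5 : 0 < m) (h6 : m ≤ 1 - σr) (h7 : 0 ≤ τ)
    (h8 : 40 * τ ≤ m ^ 2) (h9 : m ≤ 1) : (39 / 80) * m ≤ 1 - σhr := by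
  have e2 : 40 * τ ≤ 1 - σr := by nlinarith [sq_nonneg m]
  have hs1 : (39 / 40) * m ≤ 1 - σhr ^ 2 := by nlinarith
  have hb1 : σhr ≤ 1 := by nlinarith
  nlinarith [sq_nonneg (1 - σhr)]

lemma final_assembly (TV τ m vα vvv : ℝ) (hTV : 0 ≤ TV) (hτ : 0 ≤ τ) (hm : 0 < m)
    (hm1 : m ≤ 1) (hvα : 0 ≤ vα) (hvv : 0 ≤ vvv)
    (hc : TV * ((39 / 80) * m) ≤ τ * vα) (hαv : m * vα ≤ vvv) :
    TV * m ^ 3 ≤ 3 * τ * vvv := by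
  have i1 : TV * ((39 / 80) * m) * m ≤ τ * (m * vα) := by nlinarith
  have i2 : TV * m ^ 2 * (39 / 80) ≤ τ * vvv := by nlinarith
  have i3 : TV * m ^ 3 ≤ TV * m ^ 2 := by
    nlinarith [mul_nonneg (mul_nonneg hTV (sq_nonneg m)) (by linarith : (0:ℝ) ≤ 1 - m)]
  nlinarith [mul_nonneg hτ hvv]

end Aux
set_option maxHeartbeats 2000000 in
theorem stmt_12 :
    ∃ C : ℝ, 0 < C ∧
    ∀
    (n p K r s : ℕ) (hs : 1 ≤ s) (hrp : r + s ≤ p) (hrK : r + s ≤ K)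
    (hpn : p ≤ n) (hKn : K ≤ n)
    (Z : Matrix (Fin n) (Fin p) ℝ) (W : Matrix (Fin n) (Fin K) ℝ)
    (hZ : Zᵀ * Z = 1) (hW : Wᵀ * W = 1)
    (U : Matrix (Fin p) (Fin p) ℝ) (V : Matrix (Fin K) (Fin K) ℝ)
    (hU : Uᵀ * U = 1) (hV : Vᵀ * V = 1)
    (σ : ℕ → ℝ)
    (hσone : ∀ i, i < r → σ i = 1)
    (hσlt : σ r < 1)
    (hσanti : ∀ i j, i ≤ j → σ j ≤ σ i)
    (hσpos : 0 < σ (r + s - 1))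
    (hσzero : ∀ i, r + s ≤ i → σ i = 0)
    (hSVD : Zᵀ * W
      = U * (Matrix.of fun (i : Fin p) (j : Fin K) =>
          if (i : ℕ) = (j : ℕ) then σ (i : ℕ) else 0) * Vᵀ)
    (Zt : Matrix (Fin n) (Fin p) ℝ) (hZt : Zt = Z * U)
    (Wt : Matrix (Fin n) (Fin K) ℝ) (hWt : Wt = W * V)
    (What : Matrix (Fin n) (Fin K) ℝ) (hWhat : Whatᵀ * What = 1)
    (Uh : Matrix (Fin p) (Fin p) ℝ) (Vh : Matrix (Fin K) (Fin K) ℝ)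
    (hUh : Uhᵀ * Uh = 1) (hVh : Vhᵀ * Vh = 1)
    (σh : ℕ → ℝ)
    (hσhanti : ∀ i j, i ≤ j → σh j ≤ σh i)
    (hσhnonneg : ∀ i, 0 ≤ σh i)
    (hSVDh : Zᵀ * What
      = Uh * (Matrix.of fun (i : Fin p) (j : Fin K) =>
          if (i : ℕ) = (j : ℕ) then σh (i : ℕ) else 0) * Vhᵀ)
    (Zh : Matrix (Fin n) (Fin p) ℝ) (hZh : Zh = Z * Uh)
    (Wbr : Matrix (Fin n) (Fin K) ℝ) (hWbr : Wbr = What * Vh)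
    (τ : ℝ) (hτ : τ = specNorm ((What * Whatᵀ - W * Wᵀ) * Z))
    (hgap : 40 * τ ≤ min ((1 - σ r) ^ 2) (σ (r + s - 1) ^ 2))
    (Mh : Matrix (Fin n) (Fin (p - r) ⊕ Fin (K - r)) ℝ)
    (hMhl : ∀ (a : Fin n) (j : Fin (p - r)),
      Mh a (Sum.inl j) = Zh a ⟨r + j.1, by have := j.2; omega⟩)
    (hMhr : ∀ (a : Fin n) (j : Fin (K - r)),
      Mh a (Sum.inr j) = Wbr a ⟨r + j.1, by have := j.2; omega⟩)
    (PRh PCh PNh : Matrix (Fin n) (Fin n) ℝ)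
    (hPRh : PRh = ∑ i ∈ (Finset.range r).attach,
      Matrix.vecMulVec
        (fun a : Fin n => Zh a ⟨i.1, by have := Finset.mem_range.mp i.2; omega⟩)
        (fun a : Fin n => Zh a ⟨i.1, by have := Finset.mem_range.mp i.2; omega⟩))
    (hPCh : PCh = (Matrix.of fun (a : Fin n) (j : Fin (p - r) ⊕ Fin (K - r)) =>
        Sum.elim (fun j' : Fin (p - r) => Zh a ⟨r + j'.1, by have := j'.2; omega⟩)
                 (fun _ : Fin (K - r) => (0 : ℝ)) j) * (Mhᵀ * Mh)⁻¹ * Mhᵀ)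
    (hPNh : PNh = (Matrix.of fun (a : Fin n) (j : Fin (p - r) ⊕ Fin (K - r)) =>
        Sum.elim (fun _ : Fin (p - r) => (0 : ℝ))
                 (fun j' : Fin (K - r) => Wbr a ⟨r + j'.1, by have := j'.2; omega⟩) j)
        * (Mhᵀ * Mh)⁻¹ * Mhᵀ)
    (X : Matrix (Fin n) (Fin p) ℝ)
    (hXcol : LinearMap.range X.mulVecLin = LinearMap.range Z.mulVecLin)
    (hXinv : IsUnit (Xᵀ * X).det)
    (β θ : Fin p → ℝ) (α : Fin n → ℝ)
    (hθmem : X.mulVec θ ∈ Submodule.span ℝ (Set.range (fun j : Fin r =>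
        fun a : Fin n => Zt a ⟨j.1, by have := j.2; omega⟩)))
    (hβmem : X.mulVec β ∈ Submodule.span ℝ (Set.range (fun j : Fin (p - r) =>
        fun a : Fin n => Zt a ⟨r + j.1, by have := j.2; omega⟩)))
    (hαmem : α ∈ Submodule.span ℝ (Set.range (fun j : Fin (K - r) =>
        fun a : Fin n => Wt a ⟨r + j.1, by have := j.2; omega⟩)))
    (Wt2 : Matrix (Fin n) (Fin (K - r)) ℝ)
    (hWt2 : ∀ (a : Fin n) (j : Fin (K - r)), Wt2 a j = Wt a ⟨r + j.1, by have := j.2; omega⟩)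
    (Wbr2 : Matrix (Fin n) (Fin (K - r)) ℝ)
    (hWbr2 : ∀ (a : Fin n) (j : Fin (K - r)), Wbr2 a j = Wbr a ⟨r + j.1, by have := j.2; omega⟩)
    (γ : Fin (K - r) → ℝ) (hγ : γ = Wt2ᵀ.mulVec α)
    (O : Matrix (Fin (K - r)) (Fin (K - r)) ℝ) (hO : O = Wbr2ᵀ * Wt2),
    vnorm (Wbr2ᵀ.mulVec (PNh.mulVec (X.mulVec β + X.mulVec θ + α)) - O.mulVec γ)
      ≤ C * τ / min ((1 - σ r) ^ 3) (σ (r + s - 1) ^ 3)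
          * vnorm (X.mulVec β + X.mulVec θ + α) := by
  classical
  refine ⟨3, by norm_num, ?_⟩
  intro n p K r s hs hrp hrK hpn hKn Z W hZ hW U V hU hV σ hσone hσlt hσanti hσpos hσzero hSVD
    Zt hZt Wt hWt What hWhat Uh Vh hUh hVh σh hσhanti hσhnonneg hSVDh Zh hZh Wbr hWbr τ hτ hgap
    Mh hMhl hMhr PRh PCh PNh hPRh hPCh hPNh X hXcol hXinv β θ α hθmem hβmem hαmem
    Wt2 hWt2 Wbr2 hWbr2 γ hγ O hO
  have hrltp : r < p := by omega
  have hrltK : r < K := by omega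
  have hrp' : r ≤ p := by omega
  have hrK' : r ≤ K := by omega
  -- scalar facts
  have hσnn : ∀ i, 0 ≤ σ i := by
    intro i
    rcases le_or_gt (r + s) i with h | h
    · rw [hσzero i h]
    · exact le_of_lt (lt_of_lt_of_le hσpos (hσanti i (r + s - 1) (by omega)))
  have hσrnn : 0 ≤ σ r := hσnn r
  set m : ℝ := min (1 - σ r) (σ (r + s - 1)) with hm
  have hmpos : 0 < m := lt_min (by linarith) hσpos
  have hmle1 : m ≤ 1 := le_trans (min_le_left _ _) (by linarith)
  have hτnn : 0 ≤ τ := by rw [hτ]; exact Aux.specNorm_nonneg _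
  have hminsq : min ((1 - σ r) ^ 2) (σ (r + s - 1) ^ 2) = m ^ 2 := by
    rcases le_total (1 - σ r) (σ (r + s - 1)) with h | h
    · rw [hm, min_eq_left h, min_eq_left (pow_le_pow_left₀ (by linarith) h 2)]
    · rw [hm, min_eq_right h, min_eq_right (pow_le_pow_left₀ hσpos.le h 2)]
  have hmincube : min ((1 - σ r) ^ 3) (σ (r + s - 1) ^ 3) = m ^ 3 := by
    rcases le_total (1 - σ r) (σ (r + s - 1)) with h | h
    · rw [hm, min_eq_left h, min_eq_left (pow_le_pow_left₀ (by linarith) h 3)]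
    · rw [hm, min_eq_right h, min_eq_right (pow_le_pow_left₀ hσpos.le h 3)]
  have hgap' : 40 * τ ≤ m ^ 2 := by rw [← hminsq]; exact hgap
  -- orthogonality consequences
  have hUU' : U * Uᵀ = 1 := mul_eq_one_comm.mp hU
  have hVV' : V * Vᵀ = 1 := mul_eq_one_comm.mp hV
  have hUhUh' : Uh * Uhᵀ = 1 := mul_eq_one_comm.mp hUh
  have hVhVh' : Vh * Vhᵀ = 1 := mul_eq_one_comm.mp hVh
  have hSVD' : Zᵀ * W = U * Aux.diagLike σ p K * Vᵀ := hSVD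
  have hSVDh' : Zᵀ * What = Uh * Aux.diagLike σh p K * Vhᵀ := hSVDh
  -- Weyl step
  have hWeyl : σh r ^ 2 ≤ σ r ^ 2 + τ := by
    rw [hτ]
    exact Aux.weyl_step (by omega) (by omega) Z W What U Uh V Vh σ σh hZ hU hV hUh hVh
      hSVD' hSVDh' hσanti hσnn hσhanti hσhnonneg
  have h1mσh : (39 / 80) * m ≤ 1 - σh r :=
    Aux.gapbound (σ r) (σh r) m τ hσrnn hσlt (hσhnonneg r) hWeyl hmpos (min_le_left _ _)
      hτnn hgap' hmle1
  have hσh1pos : 0 < 1 - σh r := lt_of_lt_of_le (by positivity) h1mσh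
  -- rotated SVD identities
  have hZWV : Zᵀ * (W * V) = U * Aux.diagLike σ p K := by
    rw [← Matrix.mul_assoc, hSVD', Matrix.mul_assoc (U * Aux.diagLike σ p K) Vᵀ V, hV,
      Matrix.mul_one]
  have hZtWt : Ztᵀ * Wt = Aux.diagLike σ p K := by
    rw [hZt, hWt, Matrix.transpose_mul, Matrix.mul_assoc, hZWV, ← Matrix.mul_assoc, hU,
      Matrix.one_mul]
  have hZWhV : Zᵀ * (What * Vh) = Uh * Aux.diagLike σh p K := by
    rw [← Matrix.mul_assoc, hSVDh', Matrix.mul_assoc (Uh * Aux.diagLike σh p K) Vhᵀ Vh, hVh,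
      Matrix.mul_one]
  have hZhWbr : Zhᵀ * Wbr = Aux.diagLike σh p K := by
    rw [hZh, hWbr, Matrix.transpose_mul, Matrix.mul_assoc, hZWhV, ← Matrix.mul_assoc, hUh,
      Matrix.one_mul]
  have hSVDh2 : Zᵀ * What = Uh * (Aux.diagLike σh p K * Vhᵀ) := by
    rw [hSVDh', Matrix.mul_assoc]
  have hZhWhat : Zhᵀ * What = Aux.diagLike σh p K * Vhᵀ := by
    calc Zhᵀ * What = Uhᵀ * (Zᵀ * What) := by
          rw [hZh, Matrix.transpose_mul, Matrix.mul_assoc]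
      _ = (Uhᵀ * Uh) * (Aux.diagLike σh p K * Vhᵀ) := by rw [hSVDh2, ← Matrix.mul_assoc]
      _ = Aux.diagLike σh p K * Vhᵀ := by rw [hUh, Matrix.one_mul]
  have hZhWW : Zhᵀ * (What * Whatᵀ) = Aux.diagLike σh p K * Wbrᵀ := by
    calc Zhᵀ * (What * Whatᵀ) = (Zhᵀ * What) * Whatᵀ := (Matrix.mul_assoc _ _ _).symm
      _ = Aux.diagLike σh p K * (Vhᵀ * Whatᵀ) := by rw [hZhWhat, Matrix.mul_assoc]
      _ = Aux.diagLike σh p K * Wbrᵀ := by rw [← Matrix.transpose_mul, ← hWbr]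
  -- orthonormal columns
  have hZto : Ztᵀ * Zt = 1 := by rw [hZt]; exact Aux.orth_mul Z U hZ hU
  have hZho : Zhᵀ * Zh = 1 := by rw [hZh]; exact Aux.orth_mul Z Uh hZ hUh
  have hWto : Wtᵀ * Wt = 1 := by rw [hWt]; exact Aux.orth_mul W V hW hV
  have hWbro : Wbrᵀ * Wbr = 1 := by rw [hWbr]; exact Aux.orth_mul What Vh hWhat hVh
  -- index embeddings and submatrices
  set cP : Fin r → Fin p := fun i => ⟨i.1, by have := i.2; omega⟩ with hcP
  set fP : Fin (p - r) → Fin p := fun j => ⟨r + j.1, by have := j.2; omega⟩ with hfP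
  set fK : Fin (K - r) → Fin K := fun j => ⟨r + j.1, by have := j.2; omega⟩ with hfK
  have hfPinj : Function.Injective fP := by
    intro a b hab
    have := congrArg Fin.val hab
    simp only [hfP] at this
    exact Fin.ext (by omega)
  have hfKinj : Function.Injective fK := by
    intro a b hab
    have := congrArg Fin.val hab
    simp only [hfK] at this
    exact Fin.ext (by omega)
  have hcPinj : Function.Injective cP := by
    intro a b hab
    have := congrArg Fin.val hab
    simp only [hcP] at this
    exact Fin.ext (by omega)
  set Zt1 : Matrix (Fin n) (Fin r) ℝ := Zt.submatrix id cP with hZt1d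
  set Zt2 : Matrix (Fin n) (Fin (p - r)) ℝ := Zt.submatrix id fP with hZt2d
  set Zh2 : Matrix (Fin n) (Fin (p - r)) ℝ := Zh.submatrix id fP with hZh2d
  have hWt2s : Wt2 = Wt.submatrix id fK := by
    ext a j
    rw [hWt2 a j]
    rfl
  have hWbr2s : Wbr2 = Wbr.submatrix id fK := by
    ext a j
    rw [hWbr2 a j]
    rfl
  have hZt1o : Zt1ᵀ * Zt1 = 1 := by
    rw [hZt1d, Aux.sub_transpose_mul, hZto, Aux.submatrix_one_inj cP hcPinj]
  have hZt2o : Zt2ᵀ * Zt2 = 1 := by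
    rw [hZt2d, Aux.sub_transpose_mul, hZto, Aux.submatrix_one_inj fP hfPinj]
  have hWt2o : Wt2ᵀ * Wt2 = 1 := by
    rw [hWt2s, Aux.sub_transpose_mul, hWto, Aux.submatrix_one_inj fK hfKinj]
  have hWbr2o : Wbr2ᵀ * Wbr2 = 1 := by
    rw [hWbr2s, Aux.sub_transpose_mul, hWbro, Aux.submatrix_one_inj fK hfKinj]
  have hZh2o : Zh2ᵀ * Zh2 = 1 := by
    rw [hZh2d, Aux.sub_transpose_mul, hZho, Aux.submatrix_one_inj fP hfPinj]
  have hZt12 : Zt1ᵀ * Zt2 = 0 := by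
    rw [hZt1d, hZt2d, Aux.sub_transpose_mul, hZto]
    ext i j
    simp only [Matrix.submatrix_apply, Matrix.one_apply, Matrix.zero_apply]
    rw [if_neg]
    intro hcon
    have := congrArg Fin.val hcon
    simp only [hcP, hfP] at this
    omega
  have hZt1Wt2 : Zt1ᵀ * Wt2 = 0 := by
    rw [hWt2s, hZt1d, Aux.sub_transpose_mul, hZtWt]
    ext i j
    simp only [Matrix.submatrix_apply, Aux.diagLike, Matrix.of_apply, Matrix.zero_apply]
    rw [if_neg]
    intro hcon
    have h1 : ((cP i) : ℕ) = (i : ℕ) := rfl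
    have h2 : ((fK j) : ℕ) = r + (j : ℕ) := rfl
    have h3 : (i : ℕ) < r := i.2
    omega
  set Gm : Matrix (Fin (p - r)) (Fin (K - r)) ℝ :=
    Aux.diagLike (fun tt => σ (r + tt)) (p - r) (K - r) with hGm
  set Gh : Matrix (Fin (p - r)) (Fin (K - r)) ℝ :=
    Aux.diagLike (fun tt => σh (r + tt)) (p - r) (K - r) with hGh
  have hZt2Wt2 : Zt2ᵀ * Wt2 = Gm := by
    rw [hWt2s, hZt2d, Aux.sub_transpose_mul, hZtWt, hGm]
    ext j k
    simp only [Matrix.submatrix_apply, Aux.diagLike, Matrix.of_apply, hfP, hfK]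
    by_cases h : (j : ℕ) = (k : ℕ)
    · rw [if_pos (by omega), if_pos h]
    · rw [if_neg (by omega), if_neg h]
  have hZh2Wbr2 : Zh2ᵀ * Wbr2 = Gh := by
    rw [hWbr2s, hZh2d, Aux.sub_transpose_mul, hZhWbr, hGh]
    ext j k
    simp only [Matrix.submatrix_apply, Aux.diagLike, Matrix.of_apply, hfP, hfK]
    by_cases h : (j : ℕ) = (k : ℕ)
    · rw [if_pos (by omega), if_pos h]
    · rw [if_neg (by omega), if_neg h]
  -- coefficient extraction
  obtain ⟨t, ht⟩ := (Submodule.mem_span_range_iff_exists_fun ℝ).mp hθmem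
  obtain ⟨c, hc⟩ := (Submodule.mem_span_range_iff_exists_fun ℝ).mp hβmem
  obtain ⟨γ0, hγ0⟩ := (Submodule.mem_span_range_iff_exists_fun ℝ).mp hαmem
  have hXθ : X *ᵥ θ = Zt1 *ᵥ t := by
    funext a
    rw [← ht, Finset.sum_apply]
    simp only [Pi.smul_apply, smul_eq_mul]
    rw [Matrix.mulVec, dotProduct]
    apply Finset.sum_congr rfl
    intro i _
    rw [mul_comm]
    rfl
  have hXβ : X *ᵥ β = Zt2 *ᵥ c := by
    funext a
    rw [← hc, Finset.sum_apply]
    simp only [Pi.smul_apply, smul_eq_mul]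
    rw [Matrix.mulVec, dotProduct]
    apply Finset.sum_congr rfl
    intro i _
    rw [mul_comm]
    rfl
  have hαW : α = Wt2 *ᵥ γ0 := by
    funext a
    rw [← hγ0, Finset.sum_apply]
    simp only [Pi.smul_apply, smul_eq_mul]
    rw [Matrix.mulVec, dotProduct]
    apply Finset.sum_congr rfl
    intro i _
    rw [mul_comm, hWt2 a i]
  -- goal abbreviations
  set vv : Fin n → ℝ := X *ᵥ β + X *ᵥ θ + α with hvvdef
  set TV : Fin (K - r) → ℝ := Wbr2ᵀ *ᵥ (PNh *ᵥ vv) - O *ᵥ γ with hTVdef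
  -- block structure of Mh
  set A : Matrix (Fin (p - r) ⊕ Fin (K - r)) (Fin (p - r) ⊕ Fin (K - r)) ℝ := Mhᵀ * Mh with hAdef
  have hMhc : Mh = Matrix.fromCols Zh2 Wbr2 := by
    ext a i
    cases i with
    | inl j =>
      rw [show Matrix.fromCols Zh2 Wbr2 a (Sum.inl j) = Zh2 a j from rfl, hZh2d]
      exact hMhl a j
    | inr j =>
      rw [show Matrix.fromCols Zh2 Wbr2 a (Sum.inr j) = Wbr2 a j from rfl, hWbr2s]
      exact hMhr a j
  have hMt : Mhᵀ = Matrix.fromRows Zh2ᵀ Wbr2ᵀ := by rw [hMhc, Matrix.transpose_fromCols]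
  have hWbr2Zh2 : Wbr2ᵀ * Zh2 = Ghᵀ := by
    have h0 := congrArg Matrix.transpose hZh2Wbr2
    rwa [Matrix.transpose_mul, Matrix.transpose_transpose] at h0
  have hAblocks : A = Matrix.fromBlocks 1 Gh Ghᵀ 1 := by
    rw [hAdef, hMt, hMhc, Matrix.fromRows_mul_fromCols, hZh2o, hWbr2o, hZh2Wbr2, hWbr2Zh2]
  -- lower bound for A
  have hGhle : ∀ y2 : Fin (K - r) → ℝ, vnorm (Gh *ᵥ y2) ≤ σh r * vnorm y2 := by
    intro y2
    rw [hGh]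
    exact Aux.vnorm_diagLike_mulVec_le _ (σh r)
      (fun tt => by rw [abs_of_nonneg (hσhnonneg _)]; exact hσhanti r (r + tt) (by omega)) y2
  have hGhtle : ∀ y1 : Fin (p - r) → ℝ, vnorm (Ghᵀ *ᵥ y1) ≤ σh r * vnorm y1 := by
    intro y1
    rw [hGh, Aux.diagLike_transpose]
    exact Aux.vnorm_diagLike_mulVec_le _ (σh r)
      (fun tt => by rw [abs_of_nonneg (hσhnonneg _)]; exact hσhanti r (r + tt) (by omega)) y1
  have hAlow : ∀ y : Fin (p - r) ⊕ Fin (K - r) → ℝ,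
      (1 - σh r) * vnorm y ≤ vnorm (A *ᵥ y) := by
    intro y
    rw [hAblocks]
    exact Aux.Ablock_low Gh (σh r) (hσhnonneg r) hGhle hGhtle y
  -- invertibility of A
  have hdet : IsUnit A.det := Aux.isUnit_det_of_low A (1 - σh r) hσh1pos hAlow
  have hAinv : A * A⁻¹ = 1 := Matrix.mul_nonsing_inv A hdet
  have hAinv' : A⁻¹ * A = 1 := Matrix.nonsing_inv_mul A hdet
  -- rewrite PNh
  have hPNh2 : PNh = Matrix.fromCols (0 : Matrix (Fin n) (Fin (p - r)) ℝ) Wbr2 * A⁻¹ * Mhᵀ := by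
    rw [hPNh]
    congr 2
    ext a i
    cases i with
    | inl j => rfl
    | inr j =>
      rw [show Matrix.fromCols (0 : Matrix (Fin n) (Fin (p - r)) ℝ) Wbr2 a (Sum.inr j)
        = Wbr2 a j from rfl, hWbr2s]
      rfl
  have hPNhvec : ∀ x : Fin n → ℝ,
      PNh *ᵥ x = Matrix.fromCols 0 Wbr2 *ᵥ (A⁻¹ *ᵥ (Mhᵀ *ᵥ x)) := by
    intro x
    rw [hPNh2, Matrix.mulVec_mulVec, Matrix.mulVec_mulVec]
  -- PNh kills the column space of Z
  have hkill : ∀ w : Fin p → ℝ, PNh *ᵥ (Z *ᵥ w) = 0 := by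
    intro w
    have hZZh : Z = Zh * Uhᵀ := by rw [hZh, Matrix.mul_assoc, hUhUh', Matrix.mul_one]
    set u : Fin p → ℝ := Uhᵀ *ᵥ w with hu
    have hZw : Z *ᵥ w = Zh *ᵥ u := by rw [hZZh, hu, ← Matrix.mulVec_mulVec]
    set w2 : Fin (p - r) → ℝ := fun j => u (fP j) with hw2
    have hMZ : Mhᵀ *ᵥ (Zh *ᵥ u) = A *ᵥ (Sum.elim w2 0) := by
      rw [hMt, Matrix.fromRows_mulVec, hAblocks, Matrix.fromBlocks_mulVec]
      rw [show (Sum.elim w2 (0 : Fin (K - r) → ℝ)) ∘ Sum.inl = w2 from rfl,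
        show (Sum.elim w2 (0 : Fin (K - r) → ℝ)) ∘ Sum.inr = 0 from rfl,
        Matrix.mulVec_zero, Matrix.mulVec_zero, Matrix.one_mulVec, add_zero, add_zero]
      have hcomp1 : Zh2ᵀ *ᵥ (Zh *ᵥ u) = w2 := by
        rw [Matrix.mulVec_mulVec, hZh2d, Aux.sub_transpose_mul_left, hZho,
          Aux.one_submatrix_mulVec, hw2]
      have hcomp2 : Wbr2ᵀ *ᵥ (Zh *ᵥ u) = Ghᵀ *ᵥ w2 := by
        rw [Matrix.mulVec_mulVec, hWbr2s, Aux.sub_transpose_mul_left]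
        have hWbrZh : Wbrᵀ * Zh = (Aux.diagLike σh p K)ᵀ := by
          have h0 := congrArg Matrix.transpose hZhWbr
          rwa [Matrix.transpose_mul, Matrix.transpose_transpose] at h0
        rw [hWbrZh, Aux.diagLike_transpose]
        funext k
        have hLHS : (((Aux.diagLike σh K p).submatrix fK id) *ᵥ u) k
            = if h : ((fK k) : ℕ) < p then σh ((fK k) : ℕ) * u ⟨((fK k) : ℕ), h⟩ else 0 := by
          rw [Matrix.mulVec, dotProduct]
          rw [show (∑ i : Fin p, (Aux.diagLike σh K p).submatrix fK id k i * u i)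
              = ∑ i : Fin p, if ((fK k) : ℕ) = (i : ℕ) then σh ((fK k) : ℕ) * u i else 0 from
            Finset.sum_congr rfl (fun i _ => by
              simp only [Matrix.submatrix_apply, id, Aux.diagLike, Matrix.of_apply, ite_mul,
                zero_mul])]
          exact Aux.sum_ite_coe ((fK k) : ℕ) (fun i : Fin p => σh ((fK k) : ℕ) * u i)
        rw [hLHS, hGh, Aux.diagLike_transpose, Aux.diagLike_mulVec_apply]
        have hkv : ((fK k) : ℕ) = r + (k : ℕ) := by simp [hfK]
        by_cases h : (k : ℕ) < p - r
        · rw [dif_pos (by omega : ((fK k) : ℕ) < p), dif_pos h]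
        · rw [dif_neg (by omega : ¬ ((fK k) : ℕ) < p), dif_neg h]
      rw [hcomp1, hcomp2]
    calc PNh *ᵥ (Z *ᵥ w)
        = Matrix.fromCols 0 Wbr2 *ᵥ (A⁻¹ *ᵥ (A *ᵥ (Sum.elim w2 0))) := by
          rw [hPNhvec, hZw, hMZ]
      _ = Matrix.fromCols 0 Wbr2 *ᵥ (Sum.elim w2 0) :=
          congrArg (fun v => Matrix.fromCols 0 Wbr2 *ᵥ v)
            (by rw [Matrix.mulVec_mulVec, hAinv', Matrix.one_mulVec])
      _ = 0 := by
          rw [Matrix.fromCols_mulVec_sumElim, Matrix.zero_mulVec, Matrix.mulVec_zero,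
            add_zero]
  -- main error vector
  set b : Fin (K - r) → ℝ := Wbr2ᵀ *ᵥ α with hb
  set aa : Fin (p - r) → ℝ := Zh2ᵀ *ᵥ α with haa
  have hMα : Mhᵀ *ᵥ α = Sum.elim aa b := by rw [hMt, Matrix.fromRows_mulVec]
  set u0 : Fin (p - r) ⊕ Fin (K - r) → ℝ := A⁻¹ *ᵥ (Mhᵀ *ᵥ α) with hu0
  set q : Fin (p - r) ⊕ Fin (K - r) → ℝ := Sum.elim 0 b with hq
  set y0 : Fin (p - r) ⊕ Fin (K - r) → ℝ := u0 - q with hy0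
  set g : Fin (p - r) → ℝ := Gh *ᵥ b with hg
  have hAq : A *ᵥ q = Sum.elim g b := by
    rw [hAblocks, hq, Matrix.fromBlocks_mulVec]
    rw [show (Sum.elim (0 : Fin (p - r) → ℝ) b) ∘ Sum.inl = 0 from rfl,
      show (Sum.elim (0 : Fin (p - r) → ℝ) b) ∘ Sum.inr = b from rfl,
      Matrix.mulVec_zero, Matrix.mulVec_zero, Matrix.one_mulVec, zero_add, zero_add, hg]
  have hAy0 : A *ᵥ y0 = Sum.elim (aa - g) 0 := by
    rw [hy0, Matrix.mulVec_sub, hAq, hu0, Matrix.mulVec_mulVec, hAinv, Matrix.one_mulVec, hMα]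
    funext i
    cases i with
    | inl j => simp
    | inr j => simp
  have hOγ : O *ᵥ γ = b := by
    rw [hO, hγ]
    have hWα : Wt2 *ᵥ (Wt2ᵀ *ᵥ α) = α := by
      rw [hαW, Matrix.mulVec_mulVec γ0 Wt2ᵀ Wt2, hWt2o, Matrix.one_mulVec]
    calc (Wbr2ᵀ * Wt2) *ᵥ (Wt2ᵀ *ᵥ α) = Wbr2ᵀ *ᵥ (Wt2 *ᵥ (Wt2ᵀ *ᵥ α)) :=
          (Matrix.mulVec_mulVec (Wt2ᵀ *ᵥ α) Wbr2ᵀ Wt2).symm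
      _ = Wbr2ᵀ *ᵥ α := by rw [hWα]
      _ = b := by rw [hb]
  have hZt1Z : Zt1 = Z * U.submatrix id cP := by
    rw [hZt1d, hZt]
    ext a j
    simp [Matrix.mul_apply]
  have hZt2Z : Zt2 = Z * U.submatrix id fP := by
    rw [hZt2d, hZt]
    ext a j
    simp [Matrix.mul_apply]
  have hTVy0 : TV = fun k => y0 (Sum.inr k) := by
    have hkθ : PNh *ᵥ (X *ᵥ θ) = 0 := by
      rw [hXθ, hZt1Z, ← Matrix.mulVec_mulVec]
      exact hkill _
    have hkβ : PNh *ᵥ (X *ᵥ β) = 0 := by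
      rw [hXβ, hZt2Z, ← Matrix.mulVec_mulVec]
      exact hkill _
    have hv1 : PNh *ᵥ vv = PNh *ᵥ α := by
      rw [hvvdef, Matrix.mulVec_add, Matrix.mulVec_add, hkθ, hkβ]
      simp
    calc TV = Wbr2ᵀ *ᵥ (PNh *ᵥ α) - b := by rw [hTVdef, hv1, hOγ]
      _ = (fun k => u0 (Sum.inr k)) - b := by
          rw [hPNhvec, ← hu0]
          congr 1
          rw [← Sum.elim_comp_inl_inr u0, Matrix.fromCols_mulVec_sumElim,
            Matrix.zero_mulVec, zero_add, Matrix.mulVec_mulVec, hWbr2o, Matrix.one_mulVec]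
          rfl
      _ = fun k => y0 (Sum.inr k) := by
          funext k
          rw [hy0]
          simp [hq]
  -- norm chain
  have hstep1 : vnorm TV ≤ vnorm y0 := by
    rw [hTVy0]
    exact Aux.vnorm_comp_le Sum.inr Sum.inr_injective y0
  have hstep2 : (1 - σh r) * vnorm y0 ≤ vnorm (aa - g) := by
    have h1 := hAlow y0
    rwa [hAy0, Aux.vnorm_sum_elim_zero] at h1
  have hstep3 : vnorm (aa - g) ≤ τ * vnorm α := by
    set yD : Fin n → ℝ := (W * Wᵀ - What * Whatᵀ) *ᵥ α with hyD
    have hWWa : (W * Wᵀ) *ᵥ α = α := by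
      have hWt2Z : Wt2 = W * V.submatrix id fK := by
        rw [hWt2s, hWt]
        ext a j
        simp [Matrix.mul_apply]
      rw [hαW, hWt2Z, ← Matrix.mulVec_mulVec γ0 W (V.submatrix id fK), Matrix.mulVec_mulVec,
        Matrix.mul_assoc, hW, Matrix.mul_one]
    have hform : aa - g = fun j => (Zhᵀ *ᵥ yD) (fP j) := by
      funext j
      have ha1 : aa j = (Zhᵀ *ᵥ ((W * Wᵀ) *ᵥ α)) (fP j) := by
        rw [hWWa, haa, hZh2d, Aux.sub_transpose_mulVec]
      have hbk : ∀ k : Fin (K - r), b k = (Wbrᵀ *ᵥ α) (fK k) := by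
        intro k
        rw [hb, hWbr2s, Aux.sub_transpose_mulVec]
      have hg1 : g j = (Zhᵀ *ᵥ ((What * Whatᵀ) *ᵥ α)) (fP j) := by
        have h2 : Zhᵀ *ᵥ ((What * Whatᵀ) *ᵥ α)
            = Aux.diagLike σh p K *ᵥ (Wbrᵀ *ᵥ α) := by
          rw [Matrix.mulVec_mulVec, hZhWW, ← Matrix.mulVec_mulVec]
        rw [h2, Aux.diagLike_mulVec_apply, hg, hGh, Aux.diagLike_mulVec_apply]
        by_cases hcond : (j : ℕ) < K - r
        · rw [dif_pos hcond, dif_pos (show ((fP j) : ℕ) < K by simp [hfP]; omega)]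
          rw [hbk ⟨(j : ℕ), hcond⟩]
        · rw [dif_neg hcond, dif_neg (show ¬ ((fP j) : ℕ) < K by simp [hfP]; omega)]
      rw [Pi.sub_apply, ha1, hg1, hyD, Matrix.sub_mulVec, Matrix.mulVec_sub, Pi.sub_apply]
    rw [hform]
    have hZht : Zhᵀ = Uhᵀ * Zᵀ := by rw [hZh, Matrix.transpose_mul]
    have hBm : Zᵀ * (W * Wᵀ - What * Whatᵀ) = -(((What * Whatᵀ - W * Wᵀ) * Z)ᵀ) := by
      rw [Matrix.transpose_mul, Matrix.transpose_sub, Matrix.transpose_mul, Matrix.transpose_mul,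
        Matrix.transpose_transpose, Matrix.transpose_transpose, ← Matrix.mul_neg, neg_sub]
    calc vnorm (fun j => (Zhᵀ *ᵥ yD) (fP j)) ≤ vnorm (Zhᵀ *ᵥ yD) :=
          Aux.vnorm_comp_le fP hfPinj _
      _ = vnorm (Zᵀ *ᵥ yD) := by
          rw [hZht, ← Matrix.mulVec_mulVec]
          exact Aux.vnorm_mulVec_orth Uhᵀ (by rw [Matrix.transpose_transpose]; exact hUhUh') _
      _ = vnorm ((((What * Whatᵀ) - W * Wᵀ) * Z)ᵀ *ᵥ α) := by
          rw [hyD, Matrix.mulVec_mulVec, hBm, Matrix.neg_mulVec, Aux.vnorm_neg]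
      _ ≤ specNorm (((What * Whatᵀ) - W * Wᵀ) * Z) * vnorm α :=
          Aux.transpose_mulVec_norm_le _ _
      _ = τ * vnorm α := by rw [hτ]
  -- lower bound for vnorm vv
  have hαγ : vnorm α = vnorm γ0 := by rw [hαW]; exact Aux.vnorm_mulVec_orth Wt2 hWt2o γ0
  have hαv : m * vnorm α ≤ vnorm vv := by
    have hvE : vv = Zt2 *ᵥ c + Zt1 *ᵥ t + Wt2 *ᵥ γ0 := by rw [hvvdef, hXβ, hXθ, hαW]
    have hZt2Zt1 : Zt2ᵀ * Zt1 = 0 := by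
      have h0 := congrArg Matrix.transpose hZt12
      rwa [Matrix.transpose_mul, Matrix.transpose_transpose, Matrix.transpose_zero] at h0
    have hGmn : ∀ v3 : Fin (K - r) → ℝ, vnorm (Gm *ᵥ v3) ≤ σ r * vnorm v3 := by
      intro v3
      rw [hGm]
      exact Aux.vnorm_diagLike_mulVec_le _ (σ r)
        (fun tt => by rw [abs_of_nonneg (hσnn _)]; exact hσanti r (r + tt) (by omega)) v3
    have hres := Aux.norm_lower Zt2 Zt1 Wt2 hZt2o hZt1o hWt2o hZt12 hZt1Wt2 Gm hZt2Wt2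
      (σ r) hσrnn hσlt hGmn m hmpos.le (min_le_left _ _) hmle1 c t γ0
    rw [hvE]
    nth_rewrite 1 [hαW]
    exact hres
  -- final assembly
  have hTVnn : 0 ≤ vnorm TV := Aux.vnorm_nonneg _
  have hchain1 : vnorm TV * (1 - σh r) ≤ τ * vnorm α := by
    calc vnorm TV * (1 - σh r) ≤ vnorm y0 * (1 - σh r) :=
          mul_le_mul_of_nonneg_right hstep1 hσh1pos.le
      _ = (1 - σh r) * vnorm y0 := mul_comm _ _
      _ ≤ vnorm (aa - g) := hstep2
      _ ≤ τ * vnorm α := hstep3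
  rw [hmincube, div_mul_eq_mul_div, le_div_iff₀ (by positivity : (0:ℝ) < m ^ 3)]
  have h39 : vnorm TV * ((39 / 80) * m) ≤ τ * vnorm α :=
    le_trans (mul_le_mul_of_nonneg_left h1mσh hTVnn) hchain1
  exact Aux.final_assembly (vnorm TV) τ m (vnorm α) (vnorm vv) hTVnn hτnn hmpos hmle1
    (Aux.vnorm_nonneg α) (Aux.vnorm_nonneg vv) h39 hαv
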